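/- arXiv:1502.03969 — 2 statements merged into one kernel-verified Lean document; each statement's English description precedes it below -/
import Mathlib

section
/- Let N ≥ 2 be an integer and let p, μ, m be real numbers with 1 < p < N, 0 ≤ μ < μ̄ := ((N−p)/p)^p and m > 0. Let f : ℝ → ℝ be continuous and satisfy (F0). Let u : (0,∞) → ℝ be a radial profile solution of the equation (hypothesis (S)) such that u(r) → 0 as r → ∞. Define φ(r) = −|u'(r)|^{p−2}u'(r)/u(r)^{p−1}. Then the function r ↦ φ(r) − (m/(p−1))^{(p−1)/p} is O(1/r) as r → ∞. -/
open Filter Topology Set Asymptotics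

lemma persist_aux {d d' : ℝ → ℝ} {a b : ℝ} (hab : a ≤ b)
    (hd : ∀ r ∈ Icc a b, HasDerivAt d (d' r) r)
    (hpos : ∀ r ∈ Icc a b, d r = 0 → 0 < d' r)
    (h0 : 0 ≤ d a) : 0 ≤ d b := by
  by_contra hb
  push_neg at hb
  set S : Set ℝ := {r | r ∈ Icc a b ∧ 0 ≤ d r} with hSdef
  have hSne : S.Nonempty := ⟨a, ⟨le_rfl, hab⟩, h0⟩
  have hSbdd : BddAbove S := ⟨b, fun x hx => hx.1.2⟩
  have hcont : ContinuousOn d (Icc a b) := fun r hr =>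
    ((hd r hr).continuousAt).continuousWithinAt
  have hclosed : IsClosed S := by
    have : S = Icc a b ∩ d ⁻¹' (Ici 0) := by
      ext x; simp [hSdef, mem_preimage]
    rw [this]
    exact hcont.preimage_isClosed_of_isClosed isClosed_Icc isClosed_Ici
  set t := sSup S with ht
  have htS : t ∈ S := hclosed.csSup_mem hSne hSbdd
  have htab : t ∈ Icc a b := htS.1
  have hdt : 0 ≤ d t := htS.2
  have htb : t < b := by
    rcases lt_or_eq_of_le htab.2 with h | h
    · exact h
    · exfalso; rw [h] at hdt; linarith
  have hev : ∀ᶠ s in 𝓝[>] t, 0 < d s := by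
    rcases lt_or_eq_of_le hdt with hdt' | hdt'
    · have := ((hd t htab).continuousAt).eventually_mem (Ioi_mem_nhds hdt')
      exact nhdsWithin_le_nhds this
    · have hd'pos : 0 < d' t := hpos t htab hdt'.symm
      have hslope : Tendsto (slope d t) (𝓝[≠] t) (𝓝 (d' t)) :=
        hasDerivAt_iff_tendsto_slope.1 (hd t htab)
      have h1 : ∀ᶠ s in 𝓝[≠] t, 0 < slope d t s :=
        hslope.eventually_mem (Ioi_mem_nhds hd'pos)
      have h2 : ∀ᶠ s in 𝓝[>] t, 0 < slope d t s :=
        nhdsWithin_mono t (fun x hx => ne_of_gt hx) h1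
      filter_upwards [h2, self_mem_nhdsWithin] with s hs hst
      have hdiv : 0 < (d s - d t) / (s - t) := by
        simpa [slope_def_field] using hs
      have hst' : 0 < s - t := sub_pos.2 hst
      rcases div_pos_iff.1 hdiv with ⟨h1', _⟩ | ⟨_, h2'⟩
      · linarith
      · linarith
  have hevb : ∀ᶠ s in 𝓝[>] t, s < b ∧ t < s := by
    have : Ioo t b ∈ 𝓝[>] t := Ioo_mem_nhdsGT htb
    filter_upwards [this] with s hs
    exact ⟨hs.2, hs.1⟩
  obtain ⟨s, hs1, hs2, hs3⟩ := (hev.and hevb).exists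
  have : s ∈ S := ⟨⟨le_trans htab.1 (le_of_lt hs3), le_of_lt hs2⟩, le_of_lt hs1⟩
  exact absurd (le_csSup hSbdd this) (not_le.2 hs3)

lemma persist_Ici {d d' : ℝ → ℝ} {a : ℝ}
    (hd : ∀ r ∈ Ici a, HasDerivAt d (d' r) r)
    (hpos : ∀ r ∈ Ici a, d r = 0 → 0 < d' r)
    (h0 : 0 ≤ d a) : ∀ b ∈ Ici a, 0 ≤ d b :=
  fun b hb => persist_aux hb (fun r hr => hd r hr.1) (fun r hr => hpos r hr.1) h0

lemma mono_of_hasDerivAt_nonneg {d d' : ℝ → ℝ} {a : ℝ}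
    (hd : ∀ r ∈ Ici a, HasDerivAt d (d' r) r)
    (hpos : ∀ r ∈ Ici a, 0 ≤ d' r) : MonotoneOn d (Ici a) := by
  apply monotoneOn_of_deriv_nonneg (convex_Ici a)
    (fun r hr => ((hd r hr).continuousAt).continuousWithinAt)
  · intro x hx
    rw [interior_Ici] at hx
    exact (hd x (mem_Ici.2 (le_of_lt (mem_Ioi.1 hx)))).differentiableAt.differentiableWithinAt
  · intro x hx
    rw [interior_Ici] at hx
    rw [(hd x (mem_Ici.2 (le_of_lt (mem_Ioi.1 hx)))).deriv]
    exact hpos x (mem_Ici.2 (le_of_lt (mem_Ioi.1 hx)))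

lemma lin_growth {φ Ric : ℝ → ℝ} {a ρ : ℝ}
    (hd : ∀ r ∈ Ici a, HasDerivAt φ (Ric r) r)
    (hge : ∀ r ∈ Ici a, ρ ≤ Ric r) :
    ∀ b ∈ Ici a, φ a + ρ * (b - a) ≤ φ b := by
  intro b hb
  have h1 : MonotoneOn (fun r => φ r - ρ * r) (Ici a) := by
    apply mono_of_hasDerivAt_nonneg (d' := fun r => Ric r - ρ)
    · intro r hr
      have := (hd r hr).sub ((hasDerivAt_id r).const_mul ρ)
      simp only [mul_one] at this
      exact this
    · intro r hr; have := hge r hr; linarith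
  have := h1 self_mem_Ici hb hb
  simp only [] at this
  linarith

lemma lin_decay {φ Ric : ℝ → ℝ} {a ρ : ℝ}
    (hd : ∀ r ∈ Ici a, HasDerivAt φ (Ric r) r)
    (hle : ∀ r ∈ Ici a, Ric r ≤ ρ) :
    ∀ b ∈ Ici a, φ b ≤ φ a + ρ * (b - a) := by
  intro b hb
  have := lin_growth (φ := fun r => -φ r) (Ric := fun r => -Ric r) (ρ := -ρ)
    (fun r hr => (hd r hr).neg) (fun r hr => neg_le_neg (hle r hr)) b hb
  linarith

lemma phi_eq {p : ℝ} {u u' φ : ℝ → ℝ} {r : ℝ}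
    (hr : 0 < r)
    (hv : 0 < u r) (hw : u' r < 0)
    (hφ : ∀ s, 0 < s → φ s = -(|u' s| ^ (p - 2) * u' s) / u s ^ (p - 1)) :
    φ r = ((-u' r) / u r) ^ (p - 1) := by
  have hw' : (0:ℝ) < -u' r := by linarith
  have habs : |u' r| = -u' r := abs_of_neg hw
  have hpow : (-u' r) ^ (p - 1) = (-u' r) ^ (p - 2) * (-u' r) := by
    rw [show p - 1 = (p-2) + 1 by ring, Real.rpow_add_one hw'.ne']
  rw [hφ r hr, habs, Real.div_rpow hw'.le hv.le, hpow]
  ring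

lemma riccati {N : ℕ} {p μ m : ℝ} {f : ℝ → ℝ} {u u' φ : ℝ → ℝ} {r : ℝ}
    (hr : 0 < r) (hp1 : 1 < p)
    (hu_pos : ∀ s, 0 < s → 0 < u s)
    (hu'r : HasDerivAt u (u' r) r)
    (hu'neg : u' r < 0)
    (hSr : HasDerivAt (fun s : ℝ => s ^ ((N:ℝ)-1) * |u' s| ^ (p-2) * u' s)
       (-(r ^ ((N:ℝ)-1) * (μ / r ^ p * u r ^ (p-1) - m * u r ^ (p-1) + f (u r)))) r)
    (hφ : ∀ s, 0 < s → φ s = -(|u' s| ^ (p - 2) * u' s) / u s ^ (p - 1)) :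
    HasDerivAt φ ((p-1) * (φ r) ^ (p/(p-1)) - m - ((N:ℝ)-1) * φ r / r + μ / r ^ p
      + f (u r) * (u r) ^ (-(p-1))) r := by
  have hp0 : (0:ℝ) < p - 1 := by linarith
  set v : ℝ := u r with hvdef
  set w : ℝ := -u' r with hwdef
  have hv : 0 < v := hu_pos r hr
  have hw : 0 < w := by simp only [hwdef]; linarith
  have habs : |u' r| = w := abs_of_neg hu'neg
  set g : ℝ → ℝ := fun s : ℝ => s ^ ((N:ℝ)-1) * |u' s| ^ (p-2) * u' s with hgdef
  set G : ℝ := -(r ^ ((N:ℝ)-1) * (μ / r ^ p * v ^ (p-1) - m * v ^ (p-1) + f v)) with hGdef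
  set h : ℝ → ℝ := fun s : ℝ => |u' s| ^ (p-2) * u' s with hhdef
  have hrpow : HasDerivAt (fun s : ℝ => s ^ (1-(N:ℝ))) ((1-(N:ℝ)) * r ^ ((1-(N:ℝ))-1)) r :=
    Real.hasDerivAt_rpow_const (Or.inl hr.ne')
  have hstep1 : HasDerivAt (fun s : ℝ => g s * s ^ (1-(N:ℝ)))
      (G * r ^ (1-(N:ℝ)) + g r * ((1-(N:ℝ)) * r ^ ((1-(N:ℝ))-1))) r := hSr.mul hrpow
  have heq1 : (fun s : ℝ => h s) =ᶠ[nhds r] (fun s : ℝ => g s * s ^ (1-(N:ℝ))) := by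
    filter_upwards [eventually_gt_nhds hr] with s hs
    have h1 : s ^ ((N:ℝ)-1) * s ^ (1-(N:ℝ)) = 1 := by
      rw [← Real.rpow_add hs]; norm_num
    simp only [hgdef, hhdef]
    calc |u' s| ^ (p-2) * u' s = (s ^ ((N:ℝ)-1) * s ^ (1-(N:ℝ))) * (|u' s| ^ (p-2) * u' s) := by
          rw [h1]; ring
      _ = s ^ ((N:ℝ)-1) * |u' s| ^ (p-2) * u' s * s ^ (1-(N:ℝ)) := by ring
  have hstep3 : HasDerivAt h (G * r ^ (1-(N:ℝ)) + g r * ((1-(N:ℝ)) * r ^ ((1-(N:ℝ))-1))) r :=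
    hstep1.congr_of_eventuallyEq heq1
  have hstep4 : HasDerivAt (fun s : ℝ => u s ^ (-(p-1)))
      (u' r * (-(p-1)) * v ^ ((-(p-1))-1)) r :=
    hu'r.rpow_const (Or.inl hv.ne')
  have hstep5 : HasDerivAt (fun s : ℝ => -(h s) * u s ^ (-(p-1)))
      (-(G * r ^ (1-(N:ℝ)) + g r * ((1-(N:ℝ)) * r ^ ((1-(N:ℝ))-1))) * v ^ (-(p-1))
        + -(h r) * (u' r * (-(p-1)) * v ^ ((-(p-1))-1))) r := hstep3.neg.mul hstep4
  have heq2 : φ =ᶠ[nhds r] (fun s : ℝ => -(h s) * u s ^ (-(p-1))) := by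
    filter_upwards [eventually_gt_nhds hr] with s hs
    rw [hφ s hs, Real.rpow_neg (hu_pos s hs).le, div_eq_mul_inv]
  have hder : HasDerivAt φ
      (-(G * r ^ (1-(N:ℝ)) + g r * ((1-(N:ℝ)) * r ^ ((1-(N:ℝ))-1))) * v ^ (-(p-1))
        + -(h r) * (u' r * (-(p-1)) * v ^ ((-(p-1))-1))) r :=
    hstep5.congr_of_eventuallyEq heq2
  have hu'w : u' r = -w := by simp [hwdef]
  have hwp1 : w ^ (p-1) = w ^ (p-2) * w := by
    rw [← Real.rpow_add_one hw.ne' (p-2)]; congr 1; ring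
  have hhr : h r = -(w ^ (p-1)) := by
    have e1 : h r = |u' r| ^ (p-2) * u' r := rfl
    rw [e1, habs, hu'w, hwp1]; ring
  have hgr : g r = -(r ^ ((N:ℝ)-1) * w ^ (p-1)) := by
    have e1 : g r = r ^ ((N:ℝ)-1) * |u' r| ^ (p-2) * u' r := rfl
    rw [e1, habs, hu'w, hwp1]; ring
  have hR1 : r ^ ((N:ℝ)-1) * r ^ (1-(N:ℝ)) = 1 := by
    rw [← Real.rpow_add hr]; norm_num
  have hR2 : r ^ ((N:ℝ)-1) * r ^ ((1-(N:ℝ))-1) = r⁻¹ := by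
    rw [← Real.rpow_add hr, show ((N:ℝ)-1) + ((1-(N:ℝ))-1) = -1 by ring, Real.rpow_neg_one]
  have hvv : v ^ (p-1) * v ^ (-(p-1)) = 1 := by
    rw [← Real.rpow_add hv]; norm_num
  have hvp : v ^ ((-(p-1))-1) = v ^ (-p) := by
    rw [show (-(p-1))-1 = -p by ring]
  have hφr : φ r = w ^ (p-1) * v ^ (-(p-1)) := by
    rw [hφ r hr, habs, hwp1, Real.rpow_neg hv.le, div_eq_mul_inv, hu'w]
    ring
  have hwvp : w ^ (p-1) * w = w ^ p := by
    rw [← Real.rpow_add_one hw.ne' (p-1)]; congr 1; ring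
  have hφp' : (φ r) ^ (p/(p-1)) = w ^ p * v ^ (-p) := by
    have hx : (0:ℝ) ≤ w * v⁻¹ := mul_nonneg hw.le (inv_nonneg.2 hv.le)
    have h1 : φ r = (w * v⁻¹) ^ (p-1) := by
      rw [hφr, Real.mul_rpow hw.le (inv_nonneg.2 hv.le), Real.inv_rpow hv.le,
        ← Real.rpow_neg hv.le]
    have h2 : (p-1) * (p/(p-1)) = p := by field_simp
    calc (φ r) ^ (p/(p-1)) = ((w * v⁻¹) ^ (p-1)) ^ (p/(p-1)) := by rw [h1]
      _ = (w * v⁻¹) ^ ((p-1) * (p/(p-1))) := (Real.rpow_mul hx _ _).symm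
      _ = (w * v⁻¹) ^ p := by rw [h2]
      _ = w ^ p * v ^ (-p) := by
          rw [Real.mul_rpow hw.le (inv_nonneg.2 hv.le), Real.inv_rpow hv.le,
            ← Real.rpow_neg hv.le]
  have hfin : -(G * r ^ (1-(N:ℝ)) + g r * ((1-(N:ℝ)) * r ^ ((1-(N:ℝ))-1))) * v ^ (-(p-1))
        + -(h r) * (u' r * (-(p-1)) * v ^ ((-(p-1))-1))
      = (p-1) * (φ r) ^ (p/(p-1)) - m - ((N:ℝ)-1) * φ r / r + μ / r ^ p
        + f v * v ^ (-(p-1)) := by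
    rw [hhr, hgr, hφp', hφr, hvp, hGdef, hu'w]
    linear_combination ((μ/r^p * v^(p-1) - m*v^(p-1) + f v) * v^(-(p-1))) * hR1
      + ((1-(N:ℝ)) * w^(p-1) * v^(-(p-1))) * hR2
      + (μ/r^p - m) * hvv + ((p-1) * v^(-p)) * hwvp
  rw [← hfin]
  exact hder

lemma rpow_slope {p a b : ℝ} (hp : 1 < p) (ha : 0 < a) (hab : a < b) :
    ∃ ξ, a < ξ ∧ ξ < b ∧
      (p-1) * b ^ (p/(p-1)) - (p-1) * a ^ (p/(p-1))
        = (p * ξ ^ (p/(p-1) - 1)) * (b - a) := by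
  have hp0 : (0:ℝ) < p - 1 := by linarith
  set P : ℝ := p/(p-1) with hP
  have hder : ∀ x ∈ Ioo a b, HasDerivAt (fun y : ℝ => (p-1) * y ^ P)
      ((p-1) * (P * x ^ (P-1))) x := by
    intro x hx
    exact (Real.hasDerivAt_rpow_const (Or.inl (ne_of_gt (lt_trans ha hx.1)))).const_mul (p-1)
  have hcont : ContinuousOn (fun y : ℝ => (p-1) * y ^ P) (Icc a b) := by
    intro x hx
    have hx0 : 0 < x := lt_of_lt_of_le ha hx.1
    exact ((Real.hasDerivAt_rpow_const (p := P) (Or.inl hx0.ne')).const_mul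
      (p-1)).continuousAt.continuousWithinAt
  obtain ⟨ξ, hξ, heq⟩ := exists_hasDerivAt_eq_slope (fun y : ℝ => (p-1) * y ^ P)
    (fun x => (p-1) * (P * x ^ (P-1))) hab hcont hder
  refine ⟨ξ, hξ.1, hξ.2, ?_⟩
  have hba : b - a ≠ 0 := ne_of_gt (by linarith)
  have hPp : (p-1) * P = p := by rw [hP]; field_simp
  field_simp at heq
  calc (p-1) * b ^ P - (p-1) * a ^ P = (p-1) * (P * ξ ^ (P-1)) * (b - a) := by
        linear_combination -(p-1) * heq
    _ = (p * ξ ^ (P - 1)) * (b - a) := by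
        rw [show (p-1) * (P * ξ ^ (P-1)) = ((p-1) * P) * ξ ^ (P-1) by ring, hPp]

set_option maxHeartbeats 2000000 in
theorem stmt_17
    (N : ℕ) (hN : 2 ≤ N) (p μ m : ℝ)
    (hp1 : 1 < p) (hpN : p < N)
    (hμ0 : 0 ≤ μ) (hμ : μ < (((N : ℝ) - p) / p) ^ p)
    (hm : 0 < m)
    (f : ℝ → ℝ) (hf : Continuous f)
    (hF0 : ∃ A > (0:ℝ), ∃ q > p, ∃ t₀ > (0:ℝ),
      ∀ t : ℝ, |t| ≤ t₀ → |f t| ≤ A * |t| ^ (q - 1))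
    (u u' : ℝ → ℝ)
    (hu_pos : ∀ r : ℝ, 0 < r → 0 < u r)
    (hu' : ∀ r : ℝ, 0 < r → HasDerivAt u (u' r) r)
    (hS : ∀ r : ℝ, 0 < r →
      HasDerivAt (fun s : ℝ => s ^ ((N : ℝ) - 1) * |u' s| ^ (p - 2) * u' s)
        (-(r ^ ((N : ℝ) - 1) *
          (μ / r ^ p * u r ^ (p - 1) - m * u r ^ (p - 1) + f (u r)))) r)
    (hu0 : Tendsto u atTop (𝓝 0))
    (φ : ℝ → ℝ)
    (hφ : ∀ r : ℝ, 0 < r →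
      φ r = -(|u' r| ^ (p - 2) * u' r) / u r ^ (p - 1)) :
    (fun r : ℝ => φ r - (m / (p - 1)) ^ ((p - 1) / p)) =O[atTop]
      fun r : ℝ => 1 / r := by
  obtain ⟨A, hA, q, hq, t₀, ht₀, hFA⟩ := hF0
  have hp0 : (0:ℝ) < p - 1 := by linarith
  have hp00 : (0:ℝ) < p := by linarith
  have hNR : (2:ℝ) ≤ (N:ℝ) := by exact_mod_cast hN
  obtain ⟨P, hPdef⟩ : ∃ x : ℝ, x = p / (p-1) := ⟨_, rfl⟩
  have hPpos : 0 < P := by rw [hPdef]; positivity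
  have hP1 : 1 < P := by
    rw [hPdef, lt_div_iff₀ hp0]; linarith
  obtain ⟨c, hcdef⟩ : ∃ x : ℝ, x = (m / (p - 1)) ^ ((p - 1) / p) := ⟨_, rfl⟩
  have hmc : 0 < m / (p-1) := div_pos hm hp0
  have hc : 0 < c := by rw [hcdef]; exact Real.rpow_pos_of_pos hmc _
  have hcP : (p-1) * c ^ P = m := by
    rw [hcdef, hPdef, ← Real.rpow_mul hmc.le,
      show ((p-1)/p) * (p/(p-1)) = 1 by field_simp, Real.rpow_one]
    field_simp
  obtain ⟨β, hβdef⟩ : ∃ x : ℝ → ℝ, x = fun r => f (u r) * (u r) ^ (-(p-1)) := ⟨_, rfl⟩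
  obtain ⟨Ric, hRicdef⟩ : ∃ x : ℝ → ℝ, x = fun r => (p-1) * (φ r) ^ P - m
      - ((N:ℝ)-1) * φ r / r + μ / r ^ p + β r := ⟨_, rfl⟩
  -- eventual smallness of the error terms
  have hub : ∀ᶠ r in atTop, |β r| ≤ A * (u r) ^ (q - p) := by
    have hupos : ∀ᶠ r in atTop, 0 < u r :=
      (eventually_gt_atTop 0).mono (fun r hr => hu_pos r hr)
    have hut : ∀ᶠ r in atTop, u r < t₀ := hu0.eventually (Iio_mem_nhds ht₀)
    filter_upwards [hupos, hut] with r h1 h2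
    have habs : |u r| = u r := abs_of_pos h1
    have hfb := hFA (u r) (by rw [habs]; exact le_of_lt h2)
    rw [habs] at hfb
    have hrn : (0:ℝ) ≤ (u r) ^ (-(p-1)) := Real.rpow_nonneg h1.le _
    calc |β r| = |f (u r)| * (u r) ^ (-(p-1)) := by
          rw [hβdef]; rw [abs_mul, abs_of_nonneg hrn]
      _ ≤ A * (u r) ^ (q-1) * (u r) ^ (-(p-1)) :=
          mul_le_mul_of_nonneg_right hfb hrn
      _ = A * (u r) ^ (q-p) := by
          rw [mul_assoc, ← Real.rpow_add h1, show (q-1) + (-(p-1)) = q - p by ring]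
  have htend : Tendsto (fun r : ℝ => μ / r ^ p + A * (u r) ^ (q-p)) atTop (𝓝 0) := by
    have h1 : Tendsto (fun r : ℝ => μ / r ^ p) atTop (𝓝 0) := by
      simp only [div_eq_mul_inv]
      have := ((tendsto_rpow_atTop hp00).inv_tendsto_atTop).const_mul μ
      simpa using this
    have h2 : Tendsto (fun r : ℝ => (u r) ^ (q-p)) atTop (𝓝 0) := by
      have hqp : (0:ℝ) < q - p := by linarith
      have hcont : ContinuousAt (fun x : ℝ => x ^ (q-p)) 0 :=
        Real.continuousAt_rpow_const 0 _ (Or.inr hqp.le)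
      have := hcont.tendsto.comp hu0
      simpa [Function.comp_def, Real.zero_rpow hqp.ne'] using this
    simpa using h1.add (h2.const_mul A)
  have hsm : ∀ e : ℝ, 0 < e → ∀ᶠ r in atTop, μ / r ^ p + A * (u r) ^ (q-p) ≤ e :=
    fun e he => (htend.eventually (Iio_mem_nhds he)).mono (fun r hr => le_of_lt hr)
  have herr : ∀ e : ℝ, 0 < e → ∀ᶠ r in atTop, |μ / r ^ p + β r| ≤ e := by
    intro e he
    filter_upwards [hsm e he, hub, eventually_gt_atTop 0] with r h1 h2 h3
    have hμr : 0 ≤ μ / r ^ p := div_nonneg hμ0 (Real.rpow_pos_of_pos h3 p).le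
    have hAu : 0 ≤ A * u r ^ (q-p) :=
      mul_nonneg hA.le (Real.rpow_nonneg (hu_pos r h3).le _)
    have habs := abs_le.1 h2
    rw [abs_le]
    constructor <;> linarith [habs.1, habs.2]
  -- eventual negativity of u'
  have hneg : ∀ᶠ r in atTop, u' r < 0 := by
    obtain ⟨R₀, hR₀⟩ := eventually_atTop.1
      ((hsm (m/2) (by linarith)).and (hub.and (eventually_ge_atTop 1)))
    rw [eventually_atTop]
    refine ⟨R₀, fun r₁ hr₁ => ?_⟩
    by_contra hcon
    push_neg at hcon
    set g : ℝ → ℝ := fun s : ℝ => s ^ ((N:ℝ)-1) * |u' s| ^ (p-2) * u' s with hgdef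
    have hpos_of : ∀ s, R₀ ≤ s → 0 < s := fun s hs =>
      lt_of_lt_of_le one_pos (le_trans (hR₀ s hs).2.2 (le_refl s))
    have hgmono : StrictMonoOn g (Ici R₀) := by
      apply strictMonoOn_of_deriv_pos (convex_Ici _)
      · intro s hs
        exact ((hS s (hpos_of s hs)).continuousAt).continuousWithinAt
      · intro s hs
        rw [interior_Ici] at hs
        have hsR : R₀ ≤ s := le_of_lt hs
        have hsp : 0 < s := hpos_of s hsR
        rw [(hS s hsp).deriv]
        have hv : 0 < u s := hu_pos s hsp
        have hvp : 0 < u s ^ (p-1) := Real.rpow_pos_of_pos hv _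
        have hvv : (u s) ^ (-(p-1)) * (u s) ^ (p-1) = 1 := by
          rw [← Real.rpow_add hv]; norm_num
        have hfv : f (u s) = β s * u s ^ (p-1) := by
          rw [hβdef]
          simp only []
          rw [mul_assoc, hvv, mul_one]
        have hβb : |β s| ≤ A * (u s) ^ (q-p) := (hR₀ s hsR).2.1
        have hsum : μ / s ^ p + A * (u s) ^ (q-p) ≤ m/2 := (hR₀ s hsR).1
        have hμs : 0 ≤ μ / s ^ p := div_nonneg hμ0 (Real.rpow_pos_of_pos hsp p).le
        have hβs : β s ≤ m/2 := le_trans (le_trans (le_abs_self _) hβb) (by linarith)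
        have hin : μ / s ^ p * u s ^ (p-1) - m * u s ^ (p-1) + f (u s) < 0 := by
          rw [hfv]
          have h1 : μ / s ^ p ≤ m/2 := by
            have : 0 ≤ A * (u s) ^ (q-p) :=
              mul_nonneg hA.le (Real.rpow_nonneg hv.le _)
            linarith
          have key : μ / s ^ p + β s ≤ m/2 := by
            linarith [le_trans (le_abs_self _) hβb]
          nlinarith [mul_le_mul_of_nonneg_right key hvp.le, mul_pos hm hvp]
        have hsN : 0 < s ^ ((N:ℝ)-1) := Real.rpow_pos_of_pos hsp _
        nlinarith [mul_pos hsN (neg_pos.2 hin)]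
    have hg0 : 0 ≤ g r₁ := by
      have h1 : (0:ℝ) ≤ |u' r₁| ^ (p-2) := Real.rpow_nonneg (abs_nonneg _) _
      have h2 : (0:ℝ) ≤ r₁ ^ ((N:ℝ)-1) :=
        (Real.rpow_pos_of_pos (hpos_of r₁ hr₁) _).le
      have : g r₁ = r₁ ^ ((N:ℝ)-1) * |u' r₁| ^ (p-2) * u' r₁ := rfl
      rw [this]
      exact mul_nonneg (mul_nonneg h2 h1) hcon
    have hu'pos : ∀ s, r₁ < s → 0 < u' s := by
      intro s hs
      have hsR : R₀ ≤ s := le_trans hr₁ hs.le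
      have hsp : 0 < s := hpos_of s hsR
      have hgs : 0 < g s :=
        lt_of_le_of_lt hg0 (hgmono hr₁ hsR hs)
      by_contra hc2
      push_neg at hc2
      rcases lt_or_eq_of_le hc2 with hlt | heq
      · have h1 : (0:ℝ) < |u' s| ^ (p-2) :=
          Real.rpow_pos_of_pos (abs_pos.2 (ne_of_lt hlt)) _
        have h2 : (0:ℝ) < s ^ ((N:ℝ)-1) := Real.rpow_pos_of_pos hsp _
        have : g s = s ^ ((N:ℝ)-1) * |u' s| ^ (p-2) * u' s := rfl
        rw [this] at hgs
        have := mul_neg_of_pos_of_neg (mul_pos h2 h1) hlt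
        linarith
      · have : g s = s ^ ((N:ℝ)-1) * |u' s| ^ (p-2) * u' s := rfl
        rw [this, heq] at hgs
        simp at hgs
    have hr₁p : 0 < r₁ := hpos_of r₁ hr₁
    have humono : MonotoneOn u (Ici (r₁+1)) := by
      apply mono_of_hasDerivAt_nonneg (d' := u')
      · intro s hs
        exact hu' s (by simp only [mem_Ici] at hs; linarith)
      · intro s hs
        simp only [mem_Ici] at hs
        exact (hu'pos s (by linarith)).le
    have hc3 : 0 < u (r₁+1) := hu_pos _ (by linarith)
    obtain ⟨b, hb1, hb2⟩ :=
      ((hu0.eventually (Iio_mem_nhds hc3)).and (eventually_ge_atTop (r₁+1))).exists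
    exact absurd (humono self_mem_Ici hb2 hb2) (not_le.2 hb1)
  -- main eventual package
  have hmain : ∀ᶠ r in atTop, 1 ≤ r ∧ u' r < 0 ∧ 0 < φ r ∧
      φ r = ((-u' r)/(u r)) ^ (p-1) ∧ HasDerivAt φ (Ric r) r := by
    filter_upwards [eventually_ge_atTop 1, hneg] with r h1 h2
    have hr0 : 0 < r := lt_of_lt_of_le one_pos h1
    have hfe : φ r = ((-u' r)/(u r)) ^ (p-1) :=
      phi_eq hr0 (hu_pos r hr0) h2 (fun s hs => hφ s hs)
    have hfp : 0 < φ r := by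
      rw [hfe]
      exact Real.rpow_pos_of_pos (div_pos (by linarith) (hu_pos r hr0)) _
    have hdφ := riccati hr0 hp1 (fun s hs => hu_pos s hs) (hu' r hr0) h2 (hS r hr0)
      (fun s hs => hφ s hs)
    refine ⟨h1, h2, hfp, hfe, ?_⟩
    simp only [hRicdef, hβdef, hPdef]
    exact hdφ
  -- upper bound
  have hupper : ∀ δ : ℝ, 0 < δ → ∀ᶠ r in atTop, φ r ≤ c + δ := by
    intro δ hδ
    have hcδ0 : 0 < c + δ := by linarith
    have hη₁ : 0 < (p-1) * (c+δ) ^ P - m := by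
      have h1 : c ^ P < (c+δ) ^ P := Real.rpow_lt_rpow hc.le (by linarith) hPpos
      nlinarith [hcP, mul_lt_mul_of_pos_left h1 hp0]
    obtain ⟨η₁, hη₁def⟩ : ∃ x : ℝ, x = (p-1) * (c+δ) ^ P - m := ⟨_, rfl⟩
    rw [← hη₁def] at hη₁
    obtain ⟨Φ₀, hΦ₁, hΦ₂⟩ : ∃ Φ₀ : ℝ, c + δ + 1 ≤ Φ₀ ∧ 4*(m+1) ≤ (p-1) * Φ₀ ^ P := by
      obtain ⟨x, hx1, hx2⟩ := (((tendsto_rpow_atTop hPpos).eventually_ge_atTop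
        (4*(m+1)/(p-1))).and (eventually_ge_atTop (c+δ+1))).exists
      refine ⟨x, hx2, ?_⟩
      rw [div_le_iff₀ hp0] at hx1
      linarith
    have hΦpos : 0 < Φ₀ := by linarith
    have hΦcδ : c + δ ≤ Φ₀ := by linarith
    obtain ⟨ρ, hρdef⟩ : ∃ x : ℝ, x = min (η₁/2) ((p-1) * (c+δ) ^ P / 2) := ⟨_, rfl⟩
    have hcδP : 0 < (c+δ) ^ P := Real.rpow_pos_of_pos hcδ0 _
    have hρpos : 0 < ρ := by
      rw [hρdef]
      exact lt_min (by linarith) (by linarith [mul_pos hp0 hcδP])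
    have hΦP1 : 0 < (p-1) * Φ₀ ^ (P-1) :=
      mul_pos hp0 (Real.rpow_pos_of_pos hΦpos (P-1))
    obtain ⟨R, hR⟩ := eventually_atTop.1
      (hmain.and ((herr (min (η₁/4) 1) (lt_min (by linarith) one_pos)).and
        ((eventually_ge_atTop (4*((N:ℝ)-1)/((p-1) * Φ₀ ^ (P-1)))).and
          (eventually_ge_atTop (4*((N:ℝ)-1)*Φ₀/η₁ + 1)))))
    rw [eventually_atTop]
    refine ⟨R, fun b hb => ?_⟩
    by_contra hcon
    push_neg at hcon
    have hfact : ∀ r, R ≤ r → (1 ≤ r ∧ u' r < 0 ∧ 0 < φ r ∧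
        φ r = ((-u' r)/(u r)) ^ (p-1) ∧ HasDerivAt φ (Ric r) r) := fun r hr => (hR r hr).1
    have hder : ∀ r, R ≤ r → HasDerivAt φ (Ric r) r := fun r hr => (hfact r hr).2.2.2.2
    have hφpos : ∀ r, R ≤ r → 0 < φ r := fun r hr => (hfact r hr).2.2.1
    have hebound : ∀ r, R ≤ r → |μ / r ^ p + β r| ≤ min (η₁/4) 1 :=
      fun r hr => (hR r hr).2.1
    have hRicsplit : ∀ r : ℝ, Ric r
        = ((p-1) * (φ r) ^ P - m) - ((N:ℝ)-1) * φ r / r + (μ / r ^ p + β r) := by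
      intro r; rw [hRicdef]; ring
    have key2 : ∀ r, R ≤ r → Φ₀ ≤ φ r → (p-1) * (φ r) ^ P / 2 ≤ Ric r := by
      intro r hr hΦr
      have h1r : 1 ≤ r := (hfact r hr).1
      have hr0 : 0 < r := by linarith
      have hφp := hφpos r hr
      have hsplit : (φ r) ^ P = φ r * (φ r) ^ (P-1) := by
        have h0 := Real.rpow_add hφp 1 (P-1)
        rw [show (1:ℝ)+(P-1) = P by ring] at h0
        rw [h0, Real.rpow_one]
      have hmono1 : Φ₀ ^ (P-1) ≤ (φ r) ^ (P-1) :=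
        Real.rpow_le_rpow hΦpos.le hΦr (by linarith)
      have hΦP : Φ₀ ^ P ≤ (φ r) ^ P := Real.rpow_le_rpow hΦpos.le hΦr hPpos.le
      have hra : 4*((N:ℝ)-1)/((p-1) * Φ₀ ^ (P-1)) ≤ r := (hR r hr).2.2.1
      have h5 : 4*((N:ℝ)-1) ≤ r * ((p-1) * Φ₀ ^ (P-1)) := by
        rw [div_le_iff₀ hΦP1] at hra; linarith
      have ht1 : ((N:ℝ)-1) * φ r / r ≤ (p-1) * (φ r) ^ P / 4 := by
        rw [div_le_div_iff₀ hr0 (by norm_num : (0:ℝ) < 4)]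
        have h6 : 4*((N:ℝ)-1) * φ r ≤ r * ((p-1) * Φ₀ ^ (P-1)) * φ r :=
          mul_le_mul_of_nonneg_right h5 hφp.le
        have h7 : r * ((p-1) * Φ₀ ^ (P-1)) * φ r ≤ r * ((p-1) * (φ r) ^ (P-1)) * φ r := by
          have h8 : (p-1) * Φ₀ ^ (P-1) ≤ (p-1) * (φ r) ^ (P-1) := by nlinarith
          exact mul_le_mul_of_nonneg_right (mul_le_mul_of_nonneg_left h8 hr0.le) hφp.le
        calc ((N:ℝ)-1) * φ r * 4 = 4*((N:ℝ)-1) * φ r := by ring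
          _ ≤ r * ((p-1) * (φ r) ^ (P-1)) * φ r := le_trans h6 h7
          _ = (p-1) * (φ r) ^ P * r := by rw [hsplit]; ring
      have ht2 : m + 1 ≤ (p-1) * (φ r) ^ P / 4 := by nlinarith
      have ht3 := abs_le.1 (le_trans (hebound r hr) (min_le_right _ _))
      rw [hRicsplit]
      linarith [ht3.1]
    have key1 : ∀ r, R ≤ r → c + δ ≤ φ r → ρ ≤ Ric r := by
      intro r hr hφr
      have h1r : 1 ≤ r := (hfact r hr).1
      have hr0 : 0 < r := by linarith
      have hφp := hφpos r hr
      rcases le_or_gt (φ r) Φ₀ with hcase | hcase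
      · have hmono : (c+δ) ^ P ≤ (φ r) ^ P := Real.rpow_le_rpow hcδ0.le hφr hPpos.le
        have hrb : 4*((N:ℝ)-1)*Φ₀/η₁ + 1 ≤ r := (hR r hr).2.2.2
        have hterm : ((N:ℝ)-1) * φ r / r ≤ η₁/4 := by
          have h4 : ((N:ℝ)-1) * φ r ≤ ((N:ℝ)-1) * Φ₀ := by nlinarith
          have h5 : 4*((N:ℝ)-1)*Φ₀ ≤ η₁ * r := by
            have h6 : 4*((N:ℝ)-1)*Φ₀/η₁ ≤ r := by linarith
            rw [div_le_iff₀ hη₁] at h6; linarith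
          rw [div_le_div_iff₀ hr0 (by norm_num : (0:ℝ) < 4)]
          linarith
        have ht3 := abs_le.1 (le_trans (hebound r hr) (min_le_left _ _))
        rw [hRicsplit]
        have h9 : η₁ ≤ (p-1) * (φ r) ^ P - m := by
          rw [hη₁def]
          linarith [mul_le_mul_of_nonneg_left hmono hp0.le]
        calc ρ ≤ η₁/2 := by rw [hρdef]; exact min_le_left _ _
          _ ≤ _ := by linarith [ht3.1]
      · have hK := key2 r hr hcase.le
        have hmono2 : (c+δ) ^ P ≤ (φ r) ^ P :=
          Real.rpow_le_rpow hcδ0.le (by linarith) hPpos.le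
        calc ρ ≤ (p-1) * (c+δ) ^ P / 2 := by rw [hρdef]; exact min_le_right _ _
          _ ≤ (p-1) * (φ r) ^ P / 2 := by nlinarith
          _ ≤ Ric r := hK
    have hstay : ∀ r, b ≤ r → c + δ ≤ φ r := by
      intro r hr
      have h0 : 0 ≤ φ b - (c+δ) := by linarith
      have hthis := persist_aux (d := fun s => φ s - (c+δ)) (d' := Ric) hr
        (fun s hs => (hder s (le_trans hb hs.1)).sub_const (c+δ))
        (fun s hs hz => by
          have hz' : φ s - (c + δ) = 0 := hz
          exact lt_of_lt_of_le hρpos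
            (key1 s (le_trans hb hs.1) (by linarith)))
        h0
      have : 0 ≤ φ r - (c+δ) := hthis
      linarith
    have hRge : ∀ r ∈ Ici b, ρ ≤ Ric r := fun r hr => key1 r (le_trans hb hr) (hstay r hr)
    have hgrow := lin_growth (a := b) (ρ := ρ)
      (fun r hr => hder r (le_trans hb hr)) hRge
    obtain ⟨r₁, hr₁def⟩ : ∃ x : ℝ, x = b + max 0 ((Φ₀ - φ b)/ρ) := ⟨_, rfl⟩
    have hbr₁ : b ≤ r₁ := by
      rw [hr₁def]; exact le_add_of_nonneg_right (le_max_left _ _)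
    have hφr₁ : Φ₀ ≤ φ r₁ := by
      have h1 := hgrow r₁ hbr₁
      have h7 : (Φ₀ - φ b)/ρ ≤ r₁ - b := by
        rw [hr₁def]; simp only [add_sub_cancel_left]; exact le_max_right _ _
      have h8 : Φ₀ - φ b ≤ ρ * (r₁ - b) := by
        rw [div_le_iff₀ hρpos] at h7; linarith
      linarith
    have hstay2 : ∀ r, r₁ ≤ r → Φ₀ ≤ φ r := by
      intro r hr
      have h0 : 0 ≤ φ r₁ - Φ₀ := by linarith
      have hthis := persist_aux (d := fun s => φ s - Φ₀) (d' := Ric) hr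
        (fun s hs => (hder s (le_trans hb (le_trans hbr₁ hs.1))).sub_const Φ₀)
        (fun s hs hz => by
          have hz' : φ s - Φ₀ = 0 := hz
          have hΦs : Φ₀ ≤ φ s := by linarith
          have hK := key2 s (le_trans hb (le_trans hbr₁ hs.1)) hΦs
          have hpp : 0 < (p-1) * (φ s) ^ P / 2 := by
            have := Real.rpow_pos_of_pos (hφpos s (le_trans hb (le_trans hbr₁ hs.1))) P
            nlinarith
          exact lt_of_lt_of_le hpp hK)
        h0
      have : 0 ≤ φ r - Φ₀ := hthis
      linarith
    obtain ⟨e₀, he₀def⟩ : ∃ x : ℝ, x = -(1/(p-1)) := ⟨_, rfl⟩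
    have he₀neg : e₀ < 0 := by
      have h99 : 0 < 1/(p-1) := by positivity
      rw [he₀def]; linarith
    have hωder : ∀ r ∈ Ici r₁, HasDerivAt (fun s => (φ s) ^ e₀)
        (Ric r * e₀ * (φ r) ^ (e₀-1)) r := by
      intro r hr
      have hRr : R ≤ r := le_trans hb (le_trans hbr₁ hr)
      exact (hder r hRr).rpow_const (Or.inl (hφpos r hRr).ne')
    have hωle : ∀ r ∈ Ici r₁, Ric r * e₀ * (φ r) ^ (e₀-1) ≤ -(1/2) := by
      intro r hr
      have hRr : R ≤ r := le_trans hb (le_trans hbr₁ hr)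
      have hφp := hφpos r hRr
      have hK := key2 r hRr (hstay2 r hr)
      have hprod : (φ r) ^ P * (φ r) ^ (e₀-1) = 1 := by
        rw [← Real.rpow_add hφp]
        rw [show P + (e₀-1) = 0 by rw [hPdef, he₀def]; field_simp; ring]
        exact Real.rpow_zero _
      have hepos : 0 < (φ r) ^ (e₀-1) := Real.rpow_pos_of_pos hφp _
      have hneg' : e₀ * (φ r) ^ (e₀-1) < 0 := mul_neg_of_neg_of_pos he₀neg hepos
      have h8 : Ric r * (e₀ * (φ r) ^ (e₀-1))
          ≤ ((p-1) * (φ r) ^ P / 2) * (e₀ * (φ r) ^ (e₀-1)) :=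
        mul_le_mul_of_nonpos_right hK hneg'.le
      have h9 : ((p-1) * (φ r) ^ P / 2) * (e₀ * (φ r) ^ (e₀-1))
          = (p-1) * e₀ / 2 * ((φ r) ^ P * (φ r) ^ (e₀-1)) := by ring
      rw [h9, hprod, mul_one] at h8
      have h10 : (p-1) * e₀ / 2 = -(1/2) := by rw [he₀def]; field_simp
      rw [h10] at h8
      calc Ric r * e₀ * (φ r) ^ (e₀-1) = Ric r * (e₀ * (φ r) ^ (e₀-1)) := by ring
        _ ≤ -(1/2) := h8
    have hdec := lin_decay (a := r₁) (ρ := -(1/2)) hωder hωle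
    obtain ⟨b₂, hb₂def⟩ : ∃ x : ℝ, x = r₁ + 2*((φ r₁) ^ e₀) + 2 := ⟨_, rfl⟩
    have hRr₁ : R ≤ r₁ := le_trans hb hbr₁
    have hωpos : ∀ r, R ≤ r → 0 < (φ r) ^ e₀ :=
      fun r hr => Real.rpow_pos_of_pos (hφpos r hr) _
    have hb₂r₁ : r₁ ≤ b₂ := by
      have := hωpos r₁ hRr₁
      rw [hb₂def]; linarith
    have h11 : (φ b₂) ^ e₀ ≤ (φ r₁) ^ e₀ + (-(1/2)) * (b₂ - r₁) := hdec b₂ hb₂r₁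
    have h12 : 0 < (φ b₂) ^ e₀ := hωpos b₂ (le_trans hRr₁ hb₂r₁)
    have h13 : b₂ - r₁ = 2*((φ r₁) ^ e₀) + 2 := by rw [hb₂def]; ring
    rw [h13] at h11
    linarith [h11, h12]
  -- lower bound
  have hRicsplitG : ∀ r : ℝ, Ric r
      = ((p-1) * (φ r) ^ P - m) - ((N:ℝ)-1) * φ r / r + (μ / r ^ p + β r) := by
    intro r; rw [hRicdef]; ring
  have hlower : ∀ δ : ℝ, 0 < δ → ∀ᶠ r in atTop, c - δ ≤ φ r := by
    intro δ hδ
    rcases le_or_gt c δ with hcase | hcase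
    · filter_upwards [hmain] with r hr
      have := hr.2.2.1
      linarith
    · have hcδ0 : 0 < c - δ := by linarith
      have hη₂ : 0 < m - (p-1) * (c-δ) ^ P := by
        have h1 : (c-δ) ^ P < c ^ P := Real.rpow_lt_rpow hcδ0.le (by linarith) hPpos
        nlinarith [hcP, mul_lt_mul_of_pos_left h1 hp0]
      obtain ⟨η₂, hη₂def⟩ : ∃ x : ℝ, x = m - (p-1) * (c-δ) ^ P := ⟨_, rfl⟩
      rw [← hη₂def] at hη₂
      obtain ⟨R, hR⟩ := eventually_atTop.1 (hmain.and (herr (η₂/4) (by linarith)))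
      rw [eventually_atTop]
      refine ⟨R, fun b hb => ?_⟩
      by_contra hcon
      push_neg at hcon
      have hder : ∀ r, R ≤ r → HasDerivAt φ (Ric r) r := fun r hr => (hR r hr).1.2.2.2.2
      have hφpos : ∀ r, R ≤ r → 0 < φ r := fun r hr => (hR r hr).1.2.2.1
      have key : ∀ r, R ≤ r → φ r ≤ c - δ → Ric r ≤ -(η₂/2) := by
        intro r hr hφr
        have h1r : 1 ≤ r := (hR r hr).1.1
        have hr0 : 0 < r := by linarith
        have hφp := hφpos r hr
        have hmono : (φ r) ^ P ≤ (c-δ) ^ P := Real.rpow_le_rpow hφp.le hφr hPpos.le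
        have ht3 := abs_le.1 (hR r hr).2
        have hNφ : 0 ≤ ((N:ℝ)-1) * φ r / r := by
          apply div_nonneg _ hr0.le
          nlinarith
        have hval : (p-1) * (c-δ) ^ P = m - η₂ := by rw [hη₂def]; ring
        rw [hRicsplitG]
        linarith [ht3.2, hNφ, mul_le_mul_of_nonneg_left hmono hp0.le, hval]
      have hstay : ∀ r, b ≤ r → φ r ≤ c - δ := by
        intro r hr
        have h0 : 0 ≤ (c - δ) - φ b := by linarith
        have hthis := persist_aux (d := fun s => (c - δ) - φ s)
          (d' := fun s => -Ric s) hr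
          (fun s hs => HasDerivAt.const_sub (c - δ) (hder s (le_trans hb hs.1)))
          (fun s hs hz => by
            have hz' : (c - δ) - φ s = 0 := hz
            have hkey := key s (le_trans hb hs.1) (by linarith)
            exact neg_pos.2 (lt_of_le_of_lt hkey (by linarith : -(η₂/2) < 0)))
          h0
        have : 0 ≤ (c - δ) - φ r := hthis
        linarith
      have hRle : ∀ r ∈ Ici b, Ric r ≤ -(η₂/2) :=
        fun r hr => key r (le_trans hb hr) (hstay r hr)
      have hdec := lin_decay (a := b) (ρ := -(η₂/2))
        (fun r hr => hder r (le_trans hb hr)) hRle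
      have hφb := hφpos b hb
      obtain ⟨b₂, hb₂def⟩ : ∃ x : ℝ, x = b + (2*(φ b) + 2)/η₂ := ⟨_, rfl⟩
      have hb₂b : b ≤ b₂ := by
        have h0 : 0 ≤ (2*(φ b) + 2)/η₂ := le_of_lt (div_pos (by linarith) hη₂)
        rw [hb₂def]; linarith
      have h11 : φ b₂ ≤ φ b + (-(η₂/2)) * (b₂ - b) := hdec b₂ hb₂b
      have h13 : b₂ - b = (2*(φ b) + 2)/η₂ := by rw [hb₂def]; ring
      have h14 : (η₂/2) * ((2*(φ b) + 2)/η₂) = φ b + 1 := by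
        field_simp
      rw [h13] at h11
      have h15 := hφpos b₂ (le_trans hb hb₂b)
      nlinarith [h11, h15, h14]
  -- regime r ≥ R₂ : c/2 ≤ φ ≤ 2c etc.
  obtain ⟨R₂, hR₂⟩ := eventually_atTop.1
    (hmain.and ((hlower (c/2) (by linarith)).and ((hupper c hc).and hub)))
  have hder2 : ∀ r, R₂ ≤ r → HasDerivAt φ (Ric r) r := fun r hr => (hR₂ r hr).1.2.2.2.2
  have hφpos2 : ∀ r, R₂ ≤ r → 0 < φ r := fun r hr => (hR₂ r hr).1.2.2.1
  have hφlo : ∀ r, R₂ ≤ r → c/2 ≤ φ r := by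
    intro r hr; have := (hR₂ r hr).2.1; linarith
  have hφhi : ∀ r, R₂ ≤ r → φ r ≤ 2*c := by
    intro r hr; have := (hR₂ r hr).2.2.1; linarith
  have hβub : ∀ r, R₂ ≤ r → |β r| ≤ A * (u r) ^ (q - p) := fun r hr => (hR₂ r hr).2.2.2
  have hR₂1 : (1:ℝ) ≤ R₂ := (hR₂ R₂ le_rfl).1.1
  have hR₂0 : (0:ℝ) < R₂ := by linarith
  -- exponential decay of u
  obtain ⟨k₁, hk₁def⟩ : ∃ x : ℝ, x = (c/2) ^ (1/(p-1)) := ⟨_, rfl⟩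
  have hk₁ : 0 < k₁ := by
    rw [hk₁def]; exact Real.rpow_pos_of_pos (by linarith) _
  have hdecayu' : ∀ r, R₂ ≤ r → u' r + k₁ * u r ≤ 0 := by
    intro r hr
    obtain ⟨h1r, hneg', hφp, hfe, _⟩ := (hR₂ r hr).1
    have hr0 : 0 < r := by linarith
    have hv := hu_pos r hr0
    have hw : 0 < -u' r := by linarith
    have h1 : c/2 ≤ ((-u' r)/(u r)) ^ (p-1) := by rw [← hfe]; exact hφlo r hr
    have h2 : k₁ ≤ (-u' r)/(u r) := by
      have hbase : (0:ℝ) ≤ (-u' r)/(u r) := div_nonneg hw.le hv.le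
      rw [hk₁def]
      have h3 := Real.rpow_le_rpow (by linarith : (0:ℝ) ≤ c/2) h1
        (by positivity : (0:ℝ) ≤ 1/(p-1))
      rw [← Real.rpow_mul hbase, show (p-1) * (1/(p-1)) = 1 by field_simp,
        Real.rpow_one] at h3
      exact h3
    have h4 : k₁ * u r ≤ -u' r := (le_div_iff₀ hv).1 h2
    linarith
  obtain ⟨C₁, hC₁def⟩ : ∃ x : ℝ, x = u R₂ * Real.exp (k₁ * R₂) := ⟨_, rfl⟩
  have hC₁pos : 0 < C₁ := by
    rw [hC₁def]; exact mul_pos (hu_pos R₂ hR₂0) (Real.exp_pos _)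
  have hudecay : ∀ r, R₂ ≤ r → u r ≤ C₁ * Real.exp (-(k₁ * r)) := by
    intro r hr
    have hmono : MonotoneOn (fun s => -(u s * Real.exp (k₁ * s))) (Ici R₂) := by
      apply mono_of_hasDerivAt_nonneg
        (d' := fun s => -((u' s + k₁ * u s) * Real.exp (k₁ * s)))
      · intro s hs
        have hs0 : 0 < s := lt_of_lt_of_le hR₂0 hs
        have hin : HasDerivAt (fun x : ℝ => k₁ * x) k₁ s := by
          simpa using (hasDerivAt_id s).const_mul k₁
        have hde : HasDerivAt (fun x : ℝ => Real.exp (k₁ * x))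
            (Real.exp (k₁ * s) * k₁) s := (Real.hasDerivAt_exp (k₁*s)).comp s hin
        have hmul := ((hu' s hs0).mul hde).neg
        convert hmul using 1
        · rfl
        · rfl
        · rfl
        ring
      · intro s hs
        have h5 := hdecayu' s hs
        have h6 : (0:ℝ) < Real.exp (k₁ * s) := Real.exp_pos _
        have h7 := mul_le_mul_of_nonneg_right h5 h6.le
        linarith [h7]
    have h6 := hmono self_mem_Ici hr hr
    have h7 : u r * Real.exp (k₁ * r) ≤ C₁ := by
      rw [hC₁def]
      have h8 : -(u R₂ * Real.exp (k₁ * R₂)) ≤ -(u r * Real.exp (k₁ * r)) := h6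
      linarith
    rw [Real.exp_neg, ← div_eq_mul_inv, le_div_iff₀ (Real.exp_pos _)]
    exact h7
  -- the constant K
  obtain ⟨α, hαdef⟩ : ∃ x : ℝ, x = k₁ * (q - p) := ⟨_, rfl⟩
  have hα : 0 < α := by rw [hαdef]; exact mul_pos hk₁ (by linarith)
  obtain ⟨K, hKdef⟩ : ∃ x : ℝ, x = μ + A * C₁ ^ (q-p) / α + ((N:ℝ)-1) * (2*c) := ⟨_, rfl⟩
  have hKpos : 0 < K := by
    have h1 : 0 ≤ A * C₁ ^ (q-p) / α :=
      le_of_lt (div_pos (mul_pos hA (Real.rpow_pos_of_pos hC₁pos _)) hα)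
    have h2 : 0 < ((N:ℝ)-1) * (2*c) := mul_pos (by linarith) (by linarith)
    rw [hKdef]; linarith
  have herrK : ∀ r, R₂ ≤ r → 1 ≤ r →
      |Ric r - ((p-1) * (φ r) ^ P - m)| ≤ K / r := by
    intro r hr h1r
    have hr0 : 0 < r := by linarith
    have hv := hu_pos r hr0
    have hφp := hφpos2 r hr
    have hsplit : Ric r - ((p-1) * (φ r) ^ P - m)
        = -(((N:ℝ)-1) * φ r / r) + (μ / r ^ p + β r) := by
      rw [hRicsplitG]; ring
    have hN1 : 0 ≤ ((N:ℝ)-1) * φ r / r :=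
      div_nonneg (mul_nonneg (by linarith) hφp.le) hr0.le
    have ht1 : ((N:ℝ)-1) * φ r / r ≤ (((N:ℝ)-1) * (2*c)) / r := by
      rw [div_le_div_iff₀ hr0 hr0]
      exact mul_le_mul_of_nonneg_right
        (mul_le_mul_of_nonneg_left (hφhi r hr) (by linarith)) hr0.le
    have hrp : r ≤ r ^ p := by
      calc r = r ^ (1:ℝ) := (Real.rpow_one r).symm
        _ ≤ r ^ p := Real.rpow_le_rpow_of_exponent_le h1r (by linarith)
    have hμ2 : μ / r ^ p ≤ μ / r := div_le_div_of_nonneg_left hμ0 hr0 hrp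
    have e1 : (u r) ^ (q-p) ≤ (C₁ * Real.exp (-(k₁*r))) ^ (q-p) :=
      Real.rpow_le_rpow hv.le (hudecay r hr) (by linarith)
    have e2 : (C₁ * Real.exp (-(k₁*r))) ^ (q-p) = C₁ ^ (q-p) * Real.exp (-(α*r)) := by
      rw [Real.mul_rpow hC₁pos.le (Real.exp_pos _).le, ← Real.exp_mul,
        show -(k₁*r)*(q-p) = -(α*r) by rw [hαdef]; ring]
    have e3 : Real.exp (-(α*r)) ≤ (α*r)⁻¹ := by
      rw [Real.exp_neg]
      have h9 : α*r ≤ Real.exp (α*r) := by linarith [Real.add_one_le_exp (α*r)]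
      exact inv_anti₀ (mul_pos hα hr0) h9
    have ht3 : |β r| ≤ (A * C₁ ^ (q-p) / α) / r := by
      have h10 := hβub r hr
      have h11 : A * (u r) ^ (q-p) ≤ A * (C₁ ^ (q-p) * (α*r)⁻¹) := by
        apply mul_le_mul_of_nonneg_left _ hA.le
        calc (u r) ^ (q-p) ≤ (C₁ * Real.exp (-(k₁*r))) ^ (q-p) := e1
          _ = C₁ ^ (q-p) * Real.exp (-(α*r)) := e2
          _ ≤ C₁ ^ (q-p) * (α*r)⁻¹ :=
              mul_le_mul_of_nonneg_left e3 (Real.rpow_nonneg hC₁pos.le _)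
      have h12 : A * (C₁ ^ (q-p) * (α*r)⁻¹) = (A * C₁ ^ (q-p) / α) / r := by
        rw [div_div, div_eq_mul_inv, mul_inv]; ring
      linarith
    have hμrp : 0 ≤ μ / r ^ p := div_nonneg hμ0 (Real.rpow_pos_of_pos hr0 p).le
    have htri : |Ric r - ((p-1) * (φ r) ^ P - m)|
        ≤ (((N:ℝ)-1) * φ r / r) + (μ/r^p + |β r|) := by
      rw [hsplit]
      calc |(-(((N:ℝ)-1) * φ r / r)) + (μ / r ^ p + β r)|
          ≤ |(-(((N:ℝ)-1) * φ r / r))| + |μ / r ^ p + β r| := abs_add_le _ _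
        _ ≤ (((N:ℝ)-1) * φ r / r) + (μ/r^p + |β r|) := by
            rw [abs_neg, abs_of_nonneg hN1]
            have h20 := abs_add_le (μ/r^p) (β r)
            rw [abs_of_nonneg hμrp] at h20
            linarith
    have hKr : K/r = μ/r + (A*C₁^(q-p)/α)/r + (((N:ℝ)-1)*(2*c))/r := by
      rw [hKdef]; ring
    linarith [htri, ht1, hμ2, ht3, hKr]
  -- slope bounds
  obtain ⟨lam, hlamdef⟩ : ∃ x : ℝ, x = p * (c/2) ^ (P - 1) := ⟨_, rfl⟩
  have hlam : 0 < lam := by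
    rw [hlamdef]
    exact mul_pos hp00 (Real.rpow_pos_of_pos (by linarith) _)
  have slope1 : ∀ x : ℝ, c ≤ x → lam * (x - c) ≤ (p-1) * x ^ P - m := by
    intro x hx1
    rcases eq_or_lt_of_le hx1 with heq | hlt
    · rw [← heq]
      have : lam * (c - c) = 0 := by ring
      rw [this]
      linarith [hcP]
    · obtain ⟨ξ, hξ1, hξ2, hξeq⟩ := rpow_slope hp1 hc hlt
      rw [← hPdef] at hξeq
      have hm1 : (c/2) ^ (P-1) ≤ ξ ^ (P-1) :=
        Real.rpow_le_rpow (by linarith) (by linarith) (by linarith [hP1])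
      have h2 : lam * (x - c) ≤ (p * ξ ^ (P-1)) * (x - c) := by
        apply mul_le_mul_of_nonneg_right _ (by linarith)
        rw [hlamdef]
        exact mul_le_mul_of_nonneg_left hm1 hp00.le
      linarith [hcP, hξeq]
  have slope2 : ∀ x : ℝ, c/2 ≤ x → x ≤ c → (p-1) * x ^ P - m ≤ lam * (x - c) := by
    intro x hx1 hx2
    rcases eq_or_lt_of_le hx2 with heq | hlt
    · rw [heq]
      have : lam * (c - c) = 0 := by ring
      rw [this]
      linarith [hcP]
    · obtain ⟨ξ, hξ1, hξ2, hξeq⟩ := rpow_slope hp1 (by linarith : (0:ℝ) < x) hlt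
      rw [← hPdef] at hξeq
      have hm1 : (c/2) ^ (P-1) ≤ ξ ^ (P-1) :=
        Real.rpow_le_rpow (by linarith) (by linarith) (by linarith [hP1])
      have h2 : lam * (c - x) ≤ (p * ξ ^ (P-1)) * (c - x) := by
        apply mul_le_mul_of_nonneg_right _ (by linarith)
        rw [hlamdef]
        exact mul_le_mul_of_nonneg_left hm1 hp00.le
      linarith [hcP, hξeq]
  -- the final constant and claim
  obtain ⟨CC, hCCdef⟩ : ∃ x : ℝ, x = 2*K/lam := ⟨_, rfl⟩
  have hCC : 0 < CC := by
    rw [hCCdef]; exact div_pos (by linarith) hlam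
  have hlamCC : lam * CC = 2*K := by
    rw [hCCdef]; field_simp
  obtain ⟨R₄, hR₄⟩ := eventually_atTop.1
    ((eventually_ge_atTop (max R₂ 1)).and (eventually_ge_atTop (2*CC/c + 1)))
  have hdCC : ∀ s : ℝ, 0 < s → HasDerivAt (fun x : ℝ => CC/x) (-(CC/s^2)) s := by
    intro s hs
    have h := (hasDerivAt_inv hs.ne').const_mul CC
    have heq : (fun x : ℝ => CC/x) = fun x : ℝ => CC * x⁻¹ := by
      funext x; rw [div_eq_mul_inv]
    rw [heq, show -(CC/s^2) = CC * -((s^2)⁻¹) by rw [div_eq_mul_inv]; ring]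
    exact h
  have hclaim : ∀ r, R₄ ≤ r → |φ r - c| ≤ CC / r := by
    intro r₄ hr₄
    obtain ⟨hA1, hA2⟩ := hR₄ r₄ hr₄
    have hR₂r : R₂ ≤ r₄ := le_trans (le_max_left _ _) hA1
    have h1r : (1:ℝ) ≤ r₄ := le_trans (le_max_right _ _) hA1
    have hr0 : 0 < r₄ := by linarith
    by_contra hcon
    push_neg at hcon
    -- common facts for s ∈ [r₄, ∞)
    have hfacts : ∀ s, r₄ ≤ s → R₂ ≤ s ∧ (1:ℝ) ≤ s ∧ 0 < s ∧ CC/s ≤ c/2 := by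
      intro s hs
      refine ⟨le_trans hR₂r hs, le_trans h1r hs, by linarith, ?_⟩
      have hs2 : 2*CC/c ≤ s := by linarith
      rw [div_le_div_iff₀ (by linarith : (0:ℝ) < s) (by norm_num : (0:ℝ) < 2)]
      rw [div_le_iff₀ hc] at hs2
      linarith
    rcases (lt_abs.1 hcon) with hup | hdown
    · -- φ r₄ > c + CC/r₄ : φ stays above, grows, contradicts hupper
      have hstay : ∀ r, r₄ ≤ r → c + CC/r ≤ φ r := by
        intro r hr
        have h0 : 0 ≤ φ r₄ - c - CC/r₄ := by linarith
        have hthis := persist_aux (d := fun s => φ s - c - CC/s)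
          (d' := fun s => Ric s - (-(CC/s^2))) hr
          (fun s hs => ((hder2 s (le_trans hR₂r hs.1)).sub_const c).sub
            (hdCC s (hfacts s hs.1).2.2.1))
          (fun s hs hz => by
            have hz' : φ s - c - CC/s = 0 := hz
            obtain ⟨hsR₂, hs1, hs0, hsCC⟩ := hfacts s hs.1
            have hCCs : 0 < CC/s := div_pos hCC hs0
            have hxc : c ≤ φ s := by linarith
            have hsl := slope1 (φ s) hxc
            have herr' := abs_le.1 (herrK s hsR₂ hs1)
            have hKs : lam * (CC/s) = 2*(K/s) := by
              rw [show (2:ℝ)*(K/s) = 2*K/s by ring, ← hlamCC]; ring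
            have hRicpos : 0 < Ric s := by
              have h30 : lam * (φ s - c) = lam * (CC/s) := by
                rw [show φ s - c = CC/s by linarith]
              have h31 : K/s < 2*(K/s) := by
                have h32 : 0 < K/s := div_pos hKpos hs0
                linarith only [h32]
              linarith only [hsl, herr'.1, hKs, h30, h31]
            have h40 : 0 < CC/s^2 := div_pos hCC (by positivity)
            linarith)
          h0
        have : 0 ≤ φ r - c - CC/r := hthis
        linarith
      -- φ is nondecreasing from r₄ on
      have hRicnn : ∀ s ∈ Ici r₄, 0 ≤ Ric s := by
        intro s hs
        obtain ⟨hsR₂, hs1, hs0, hsCC⟩ := hfacts s hs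
        have hCCs : 0 < CC/s := div_pos hCC (hfacts s hs).2.2.1
        have hst := hstay s hs
        have hsl := slope1 (φ s) (by linarith)
        have herr' := abs_le.1 (herrK s hsR₂ hs1)
        have hKs : lam * (CC/s) = 2*(K/s) := by
              rw [show (2:ℝ)*(K/s) = 2*K/s by ring, ← hlamCC]; ring
        have h41 : lam * (CC/s) ≤ lam * (φ s - c) :=
          mul_le_mul_of_nonneg_left (by linarith) hlam.le
        have h42 : 0 < K/s := div_pos hKpos (hfacts s hs).2.2.1
        linarith only [hsl, herr'.1, hKs, h41, h42]
      have hmono := mono_of_hasDerivAt_nonneg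
        (d := φ) (d' := Ric) (a := r₄)
        (fun s hs => hder2 s (le_trans hR₂r hs)) hRicnn
      obtain ⟨ε₀, hε₀def⟩ : ∃ x : ℝ, x = φ r₄ - c := ⟨_, rfl⟩
      have hε₀pos : 0 < ε₀ := by
        have h60 : 0 < CC/r₄ := div_pos hCC hr0
        rw [hε₀def]; linarith
      obtain ⟨rB, hrB⟩ := eventually_atTop.1 (hupper (ε₀/2) (by linarith))
      have hrCr : r₄ ≤ max r₄ rB := le_max_left _ _
      have h50 : φ (max r₄ rB) ≤ c + ε₀/2 := hrB _ (le_max_right _ _)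
      have h51 : φ r₄ ≤ φ (max r₄ rB) := hmono self_mem_Ici hrCr hrCr
      have h52 : ε₀ = φ r₄ - c := hε₀def
      linarith
    · -- φ r₄ < c - CC/r₄ : φ stays below, decreases, contradicts hlower
      have hφr₄lt : φ r₄ < c - CC/r₄ := by linarith
      have hstay : ∀ r, r₄ ≤ r → φ r ≤ c - CC/r := by
        intro r hr
        have h0 : 0 ≤ (c - CC/r₄) - φ r₄ := by linarith
        have hthis := persist_aux (d := fun s => (c - CC/s) - φ s)
          (d' := fun s => -(-(CC/s^2)) - Ric s) hr
          (fun s hs => (HasDerivAt.const_sub c (hdCC s (hfacts s hs.1).2.2.1)).sub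
            (hder2 s (le_trans hR₂r hs.1)))
          (fun s hs hz => by
            have hz' : (c - CC/s) - φ s = 0 := hz
            obtain ⟨hsR₂, hs1, hs0, hsCC⟩ := hfacts s hs.1
            have hCCs : 0 < CC/s := div_pos hCC hs0
            have hxlo : c/2 ≤ φ s := by linarith
            have hxhi : φ s ≤ c := by linarith
            have hsl := slope2 (φ s) hxlo hxhi
            have herr' := abs_le.1 (herrK s hsR₂ hs1)
            have hKs : lam * (CC/s) = 2*(K/s) := by
              rw [show (2:ℝ)*(K/s) = 2*K/s by ring, ← hlamCC]; ring
            have h30 : lam * (φ s - c) = -(lam * (CC/s)) := by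
              rw [show φ s - c = -(CC/s) by linarith]; ring
            have hRicneg : Ric s < 0 := by
              have h42 : 0 < K/s := div_pos hKpos hs0
              linarith only [hsl, herr'.2, hKs, h30, h42]
            have h40 : 0 < CC/s^2 := div_pos hCC (by positivity)
            linarith)
          h0
        have : 0 ≤ (c - CC/r) - φ r := hthis
        linarith
      have hRicnp : ∀ s ∈ Ici r₄, 0 ≤ -Ric s := by
        intro s hs
        obtain ⟨hsR₂, hs1, hs0, hsCC⟩ := hfacts s hs
        have hCCs : 0 < CC/s := div_pos hCC (hfacts s hs).2.2.1
        have hst := hstay s hs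
        have hxlo : c/2 ≤ φ s := hφlo s hsR₂
        have hsl := slope2 (φ s) hxlo (by linarith)
        have herr' := abs_le.1 (herrK s hsR₂ hs1)
        have hKs : lam * (CC/s) = 2*(K/s) := by
              rw [show (2:ℝ)*(K/s) = 2*K/s by ring, ← hlamCC]; ring
        have h41 : lam * (φ s - c) ≤ lam * (-(CC/s)) :=
          mul_le_mul_of_nonneg_left (by linarith) hlam.le
        have h42 : 0 < K/s := div_pos hKpos (hfacts s hs).2.2.1
        linarith only [hsl, herr'.2, hKs, h41, h42]
      have hmono := mono_of_hasDerivAt_nonneg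
        (d := fun s => -φ s) (d' := fun s => -Ric s) (a := r₄)
        (fun s hs => (hder2 s (le_trans hR₂r hs)).neg) hRicnp
      obtain ⟨ε₀, hε₀def⟩ : ∃ x : ℝ, x = c - φ r₄ := ⟨_, rfl⟩
      have hε₀pos : 0 < ε₀ := by
        have h60 : 0 < CC/r₄ := div_pos hCC hr0
        rw [hε₀def]; linarith
      obtain ⟨rB, hrB⟩ := eventually_atTop.1 (hlower (ε₀/2) (by linarith))
      have hrCr : r₄ ≤ max r₄ rB := le_max_left _ _
      have h50 : c - ε₀/2 ≤ φ (max r₄ rB) := hrB _ (le_max_right _ _)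
      have h51 : -φ r₄ ≤ -φ (max r₄ rB) := hmono self_mem_Ici hrCr hrCr
      have h52 : ε₀ = c - φ r₄ := hε₀def
      linarith
  -- conclusion
  rw [Asymptotics.isBigO_iff]
  refine ⟨CC, ?_⟩
  filter_upwards [eventually_ge_atTop R₄, eventually_ge_atTop 1] with r h1 h2
  have hcl := hclaim r h1
  have hr0 : (0:ℝ) < r := by linarith
  rw [Real.norm_eq_abs, Real.norm_eq_abs]
  have habs1 : |1/r| = 1/r := abs_of_pos (div_pos one_pos hr0)
  rw [habs1]
  rw [← hcdef]
  calc |φ r - c| ≤ CC/r := hcl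
    _ = CC * (1/r) := by ring
end

section
/- Let N ≥ 2 be an integer and let p, μ, m be real numbers with 1 < p < N, 0 ≤ μ < μ̄ := ((N−p)/p)^p and m > 0. Let f : ℝ → ℝ be continuous and satisfy (F0). Let u : (0,∞) → ℝ be a radial profile solution of the equation (hypothesis (S)) such that u(r) → 0 as r → ∞. Set δ₁ = (m/(2(p−1)))^{1/p}. Then there exist constants C > 0 and R > 0 such that u(r) ≤ C·e^{−δ₁·r} for all r ≥ R. -/
open Filter Topology Set

set_option maxHeartbeats 1000000 in
theorem stmt_19
    (N : ℕ) (hN : 2 ≤ N) (p μ m : ℝ)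
    (hp1 : 1 < p) (hpN : p < N)
    (hμ0 : 0 ≤ μ) (hμ : μ < (((N : ℝ) - p) / p) ^ p)
    (hm : 0 < m)
    (f : ℝ → ℝ) (hf : Continuous f)
    (hF0 : ∃ A > (0:ℝ), ∃ q > p, ∃ t₀ > (0:ℝ),
      ∀ t : ℝ, |t| ≤ t₀ → |f t| ≤ A * |t| ^ (q - 1))
    (u u' : ℝ → ℝ)
    (hu_pos : ∀ r : ℝ, 0 < r → 0 < u r)
    (hu' : ∀ r : ℝ, 0 < r → HasDerivAt u (u' r) r)
    (hS : ∀ r : ℝ, 0 < r →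
      HasDerivAt (fun s : ℝ => s ^ ((N : ℝ) - 1) * |u' s| ^ (p - 2) * u' s)
        (-(r ^ ((N : ℝ) - 1) *
          (μ / r ^ p * u r ^ (p - 1) - m * u r ^ (p - 1) + f (u r)))) r)
    (hu0 : Tendsto u atTop (𝓝 0)) :
    ∃ C : ℝ, 0 < C ∧ ∃ R : ℝ, 0 < R ∧
      ∀ r : ℝ, R ≤ r →
        u r ≤ C * Real.exp (-(m / (2 * (p - 1))) ^ ((1 : ℝ) / p) * r) := by
  obtain ⟨A, hA, q, hq, t₀, ht₀, hfb⟩ := hF0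
  have hp0 : (0:ℝ) < p := lt_trans one_pos hp1
  have hp1' : (0:ℝ) < p - 1 := by linarith
  have hpne : p ≠ 0 := ne_of_gt hp0
  have hN1 : (1:ℝ) ≤ (N:ℝ) - 1 := by
    have : (2:ℝ) ≤ (N:ℝ) := by exact_mod_cast hN
    linarith
  set δ : ℝ := (m / (2 * (p - 1))) ^ ((1:ℝ)/p) with hδdef
  have hbase : (0:ℝ) < m / (2 * (p - 1)) := by positivity
  have hδpos : 0 < δ := Real.rpow_pos_of_pos hbase _
  have hδp : δ ^ p = m / (2 * (p - 1)) := by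
    rw [hδdef, ← Real.rpow_mul hbase.le, one_div, inv_mul_cancel₀ hpne, Real.rpow_one]
  -- step A : smallness radius R₀
  have hstepA : ∃ R₀ : ℝ, 1 ≤ R₀ ∧ ∀ r : ℝ, R₀ ≤ r →
      μ / r ^ p * u r ^ (p - 1) - m * u r ^ (p - 1) + f (u r)
        ≤ -(m/2) * u r ^ (p - 1) := by
    have hqp : (0:ℝ) < q - p := by linarith
    set t₁ : ℝ := min t₀ ((m/(4*A)) ^ ((1:ℝ)/(q-p))) with ht₁def
    have hb2 : (0:ℝ) < m/(4*A) := by positivity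
    have ht₁pos : 0 < t₁ := lt_min ht₀ (Real.rpow_pos_of_pos hb2 _)
    have ht₁f : A * t₁ ^ (q-p) ≤ m/4 := by
      have h1 : t₁ ^ (q-p) ≤ ((m/(4*A)) ^ ((1:ℝ)/(q-p))) ^ (q-p) :=
        Real.rpow_le_rpow ht₁pos.le (min_le_right _ _) hqp.le
      have h2 : ((m/(4*A)) ^ ((1:ℝ)/(q-p))) ^ (q-p) = m/(4*A) := by
        rw [← Real.rpow_mul hb2.le, one_div, inv_mul_cancel₀ (ne_of_gt hqp), Real.rpow_one]
      rw [h2] at h1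
      calc A * t₁ ^ (q-p) ≤ A * (m/(4*A)) := by nlinarith
        _ = m/4 := by field_simp
    obtain ⟨R₁, hR₁⟩ := eventually_atTop.mp (hu0.eventually_lt_const ht₁pos)
    refine ⟨max (max R₁ 1) (4*μ/m + 1), le_trans (le_max_right _ _) (le_max_left _ _), ?_⟩
    intro r hr
    have hr1 : (1:ℝ) ≤ r := le_trans (le_trans (le_max_right _ _) (le_max_left _ _)) hr
    have hrR₁ : R₁ ≤ r := le_trans (le_trans (le_max_left _ _) (le_max_left _ _)) hr
    have hrμ : 4*μ/m + 1 ≤ r := le_trans (le_max_right _ _) hr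
    have hr0 : (0:ℝ) < r := lt_of_lt_of_le one_pos hr1
    have hU := hu_pos r hr0
    have hUt₁ : u r < t₁ := hR₁ r hrR₁
    have hW : 0 < u r ^ (p-1) := Real.rpow_pos_of_pos hU _
    have hrp : r ≤ r ^ p := by
      have := Real.rpow_le_rpow_of_exponent_le hr1 hp1.le
      rwa [Real.rpow_one] at this
    have hrppos : 0 < r ^ p := Real.rpow_pos_of_pos hr0 _
    have hμr : μ / r ^ p ≤ m/4 := by
      rw [div_le_iff₀ hrppos]
      have h3 : m/4 * (4*μ/m + 1) ≤ m/4 * r ^ p := by nlinarith [le_trans hrμ hrp]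
      have h4 : m/4 * (4*μ/m + 1) = μ + m/4 := by field_simp
      linarith
    have habs : |u r| ≤ t₀ := by
      rw [abs_of_pos hU]; exact le_trans hUt₁.le (min_le_left _ _)
    have hfu : f (u r) ≤ A * u r ^ (q-1) := by
      have h5 := hfb (u r) habs
      rw [abs_of_pos hU] at h5
      exact le_trans (le_abs_self _) h5
    have hsplit : u r ^ (q-1) = u r ^ (q-p) * u r ^ (p-1) := by
      rw [← Real.rpow_add hU]; ring_nf
    have hmono : u r ^ (q-p) ≤ t₁ ^ (q-p) := Real.rpow_le_rpow hU.le hUt₁.le hqp.le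
    have h5 : A * u r ^ (q-p) ≤ m/4 :=
      le_trans (mul_le_mul_of_nonneg_left hmono hA.le) ht₁f
    have hfu2 : f (u r) ≤ m/4 * u r ^ (p-1) := by
      calc f (u r) ≤ A * (u r ^ (q-p) * u r ^ (p-1)) := by rw [← hsplit]; exact hfu
        _ = (A * u r ^ (q-p)) * u r ^ (p-1) := by ring
        _ ≤ m/4 * u r ^ (p-1) := mul_le_mul_of_nonneg_right h5 hW.le
    have h6 := mul_le_mul_of_nonneg_right hμr hW.le
    linarith
  obtain ⟨R₀, hR₀1, hK⟩ := hstepA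
  have hR₀pos : (0:ℝ) < R₀ := lt_of_lt_of_le one_pos hR₀1
  have hrpos : ∀ r : ℝ, R₀ ≤ r → (0:ℝ) < r := fun r hr => lt_of_lt_of_le hR₀pos hr
  set g : ℝ → ℝ := fun s : ℝ => s ^ ((N : ℝ) - 1) * |u' s| ^ (p - 2) * u' s with hgdef
  have hg' : ∀ r : ℝ, 0 < r → HasDerivAt g
      (-(r ^ ((N : ℝ) - 1) *
        (μ / r ^ p * u r ^ (p - 1) - m * u r ^ (p - 1) + f (u r)))) r := hS
  -- step B : u' < 0 on [R₀, ∞)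
  have hgmono : StrictMonoOn g (Ici R₀) := by
    apply strictMonoOn_of_deriv_pos (convex_Ici R₀)
    · intro x hx
      exact ((hg' x (hrpos x hx)).continuousAt).continuousWithinAt
    · intro x hx
      rw [interior_Ici] at hx
      have hx0 := hrpos x hx.le
      rw [(hg' x hx0).deriv]
      have hKx := hK x hx.le
      have hW : 0 < u x ^ (p - 1) := Real.rpow_pos_of_pos (hu_pos x hx0) _
      have ha : 0 < x ^ ((N:ℝ) - 1) := Real.rpow_pos_of_pos hx0 _
      nlinarith [mul_le_mul_of_nonneg_left hKx ha.le, mul_pos ha hW, hm]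
  have hu'neg : ∀ r : ℝ, R₀ ≤ r → u' r < 0 := by
    intro r hr
    by_contra hcon
    push_neg at hcon
    have hg₁ : 0 ≤ g r := by
      have ha : (0:ℝ) ≤ r ^ ((N:ℝ) - 1) := (Real.rpow_pos_of_pos (hrpos r hr) _).le
      exact mul_nonneg (mul_nonneg ha (Real.rpow_nonneg (abs_nonneg _) _)) hcon
    have hu'pos : ∀ x : ℝ, r < x → 0 < u' x := by
      intro x hx
      have hgx : 0 < g x :=
        lt_of_le_of_lt hg₁ (hgmono (mem_Ici.mpr hr) (mem_Ici.mpr (le_trans hr hx.le)) hx)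
      by_contra hc
      push_neg at hc
      have ha : (0:ℝ) ≤ x ^ ((N:ℝ) - 1) :=
        (Real.rpow_pos_of_pos (hrpos x (le_trans hr hx.le)) _).le
      have : g x ≤ 0 := mul_nonpos_of_nonneg_of_nonpos
        (mul_nonneg ha (Real.rpow_nonneg (abs_nonneg _) _)) hc
      linarith
    have hr0 := hrpos r hr
    have humono : StrictMonoOn u (Ici (r+1)) := by
      apply strictMonoOn_of_deriv_pos (convex_Ici _)
      · intro x hx
        have : (0:ℝ) < x := by have := mem_Ici.mp hx; linarith
        exact ((hu' x this).continuousAt).continuousWithinAt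
      · intro x hx
        rw [interior_Ici] at hx
        have hx1 : r + 1 < x := hx
        rw [(hu' x (by linarith)).deriv]
        exact hu'pos x (by linarith)
    obtain ⟨R₂, hR₂⟩ := eventually_atTop.mp
      (hu0.eventually_lt_const (hu_pos (r+1) (by linarith)))
    set x := max R₂ (r+2) with hxdef
    have hx2 : r + 2 ≤ x := le_max_right _ _
    have h1 : u x < u (r+1) := hR₂ x (le_max_left _ _)
    have h2 : u (r+1) < u x :=
      humono (mem_Ici.mpr le_rfl) (mem_Ici.mpr (by linarith)) (by linarith)
    linarith
  -- step C : the function ψ and its differential inequality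
  set D : ℝ → ℝ := fun s : ℝ => s ^ ((N : ℝ) - 1) * u s ^ (p - 1) with hDdef
  have hDpos : ∀ r : ℝ, R₀ ≤ r → 0 < D r := by
    intro r hr
    have h0 := hrpos r hr
    exact mul_pos (Real.rpow_pos_of_pos h0 _) (Real.rpow_pos_of_pos (hu_pos r h0) _)
  set ψ : ℝ → ℝ := fun s : ℝ => -g s / D s with hψdef
  have hψ_eq : ∀ r : ℝ, R₀ ≤ r → ψ r = (-u' r / u r) ^ (p - 1) := by
    intro r hr
    have hv := hu'neg r hr
    have hr0 := hrpos r hr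
    have hU := hu_pos r hr0
    have hnv : (0:ℝ) < -u' r := by linarith
    have ha : (0:ℝ) < r ^ ((N:ℝ) - 1) := Real.rpow_pos_of_pos hr0 _
    have habs : |u' r| = -u' r := abs_of_neg hv
    have hkey : (-u' r) ^ (p - 2) * (-u' r) = (-u' r) ^ (p - 1) := by
      rw [← Real.rpow_add_one (ne_of_gt hnv) (p - 2)]
      congr 1
      ring
    have hnum : -(r ^ ((N:ℝ) - 1) * (-u' r) ^ (p - 2) * u' r)
        = r ^ ((N:ℝ) - 1) * (-u' r) ^ (p - 1) := by
      rw [← hkey]; ring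
    show -(r ^ ((N:ℝ) - 1) * |u' r| ^ (p - 2) * u' r)
        / (r ^ ((N:ℝ) - 1) * u r ^ (p - 1)) = (-u' r / u r) ^ (p - 1)
    rw [habs, hnum, mul_div_mul_left _ _ ha.ne', Real.div_rpow hnv.le hU.le]
  have hψ_nonneg : ∀ r : ℝ, R₀ ≤ r → 0 ≤ ψ r := by
    intro r hr
    have hv := hu'neg r hr
    have hU := hu_pos r (hrpos r hr)
    rw [hψ_eq r hr]
    exact Real.rpow_nonneg (div_nonneg (by linarith) hU.le) _
  have hspow : ∀ r : ℝ, R₀ ≤ r → (ψ r) ^ (p/(p-1)) = (-u' r / u r) ^ p := by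
    intro r hr
    have hv := hu'neg r hr
    have hU := hu_pos r (hrpos r hr)
    rw [hψ_eq r hr, ← Real.rpow_mul (div_nonneg (by linarith) hU.le)]
    congr 1
    field_simp
  have hψD : ∀ r : ℝ, R₀ ≤ r → DifferentiableAt ℝ ψ r ∧
      deriv ψ r ≤ (p - 1) * (ψ r) ^ (p/(p-1)) - m/2 := by
    intro r hr
    have hr0 := hrpos r hr
    have hU := hu_pos r hr0
    have hv := hu'neg r hr
    have hnv : (0:ℝ) < -u' r := by linarith
    have ha : (0:ℝ) < r ^ ((N:ℝ) - 1) := Real.rpow_pos_of_pos hr0 _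
    have hb : (0:ℝ) < r ^ ((N:ℝ) - 1 - 1) := Real.rpow_pos_of_pos hr0 _
    have hW : (0:ℝ) < u r ^ (p - 1) := Real.rpow_pos_of_pos hU _
    have hw : (0:ℝ) < u r ^ (p - 1 - 1) := Real.rpow_pos_of_pos hU _
    have hD := hDpos r hr
    have hn : HasDerivAt (fun s => -g s)
        (r ^ ((N:ℝ) - 1) * (μ / r ^ p * u r ^ (p - 1) - m * u r ^ (p - 1) + f (u r))) r := by
      have h := (hg' r hr0).neg
      rw [neg_neg] at h
      exact h
    have hDd : HasDerivAt D
        ((((N:ℝ) - 1) * r ^ ((N:ℝ) - 1 - 1)) * u r ^ (p - 1)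
          + r ^ ((N:ℝ) - 1) * (u' r * (p - 1) * u r ^ (p - 1 - 1))) r :=
      (Real.hasDerivAt_rpow_const (Or.inl hr0.ne')).mul
        ((hu' r hr0).rpow_const (Or.inl hU.ne'))
    set Kv : ℝ := r ^ ((N:ℝ) - 1) * (μ / r ^ p * u r ^ (p - 1) - m * u r ^ (p - 1) + f (u r))
      with hKvdef
    set Dv : ℝ := (((N:ℝ) - 1) * r ^ ((N:ℝ) - 1 - 1)) * u r ^ (p - 1)
      + r ^ ((N:ℝ) - 1) * (u' r * (p - 1) * u r ^ (p - 1 - 1)) with hDvdef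
    have hψd : HasDerivAt ψ ((Kv * D r - -g r * Dv) / D r ^ 2) r := hn.div hDd hD.ne'
    refine ⟨hψd.differentiableAt, ?_⟩
    rw [hψd.deriv]
    -- identities
    have hng : D r * ψ r = -g r := by
      show D r * (-g r / D r) = -g r
      field_simp
    have ha_eq : r ^ ((N:ℝ) - 1) = r ^ ((N:ℝ) - 1 - 1) * r := by
      rw [← Real.rpow_add_one hr0.ne' ((N:ℝ) - 1 - 1)]
      congr 1
      ring
    have hW_eq : u r ^ (p - 1) = u r ^ (p - 1 - 1) * u r := by
      rw [← Real.rpow_add_one hU.ne' (p - 1 - 1)]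
      congr 1
      ring
    have hDr : D r = (r ^ ((N:ℝ) - 1 - 1) * r) * (u r ^ (p - 1 - 1) * u r) := by
      show r ^ ((N:ℝ) - 1) * u r ^ (p - 1) = _
      rw [← ha_eq, ← hW_eq]
    have hspos : (0:ℝ) < -u' r / u r := div_pos hnv hU
    have hs : ψ r * (-u' r / u r) = (ψ r) ^ (p/(p-1)) := by
      rw [hspow r hr, hψ_eq r hr, ← Real.rpow_add_one hspos.ne' (p - 1)]
      congr 1
      ring
    have hKvb : Kv ≤ -(m/2) * D r := by
      have h1 := mul_le_mul_of_nonneg_left (hK r hr) ha.le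
      calc Kv ≤ r ^ ((N:ℝ) - 1) * (-(m/2) * u r ^ (p - 1)) := h1
        _ = -(m/2) * D r := by show _ = -(m/2) * (r ^ ((N:ℝ) - 1) * u r ^ (p - 1)); ring
    -- main algebraic identity
    have hE : (Kv * D r - -g r * Dv) / D r ^ 2
        = Kv / D r - ψ r * (((N:ℝ) - 1)/r) - (p - 1) * (ψ r * (u' r / u r)) := by
      rw [← hng]
      rw [hDvdef, hDr, ha_eq, hW_eq]
      field_simp [hb.ne', hw.ne', hr0.ne', hU.ne']
      ring
    rw [hE]
    have h1 : Kv / D r ≤ -(m/2) := by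
      rw [div_le_iff₀ hD]
      linarith [hKvb]
    have h2 : 0 ≤ ψ r * (((N:ℝ) - 1)/r) :=
      mul_nonneg (hψ_nonneg r hr) (div_nonneg (by linarith) hr0.le)
    have h3 : (p - 1) * (ψ r * (u' r / u r)) = -((p - 1) * (ψ r) ^ (p/(p-1))) := by
      rw [← hs]
      ring
    rw [h3]
    linarith
  -- step D : lower bound on ψ via comparison
  have hψ_low : ∀ r : ℝ, R₀ ≤ r → m/2 ≤ (p - 1) * (ψ r) ^ (p/(p-1)) := by
    intro r₂ hr₂
    by_contra hcon
    push_neg at hcon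
    set ε : ℝ := m/2 - (p - 1) * (ψ r₂) ^ (p/(p-1)) with hεdef
    have hε : 0 < ε := by rw [hεdef]; linarith
    set b : ℝ := r₂ + (ψ r₂ + 1) * (2/ε) + 1 with hbdef
    have h0ψ : 0 ≤ ψ r₂ := hψ_nonneg r₂ hr₂
    have hr₂b : r₂ ≤ b := by
      have hge : 0 ≤ (ψ r₂ + 1) * (2/ε) := by positivity
      rw [hbdef]; linarith
    have hcont : ContinuousOn ψ (Icc r₂ b) := fun x hx =>
      ((hψD x (le_trans hr₂ hx.1)).1.continuousAt).continuousWithinAt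
    have hder : ∀ x ∈ Ico r₂ b, HasDerivWithinAt ψ (deriv ψ x) (Ici x) x := fun x hx =>
      ((hψD x (le_trans hr₂ hx.1)).1.hasDerivAt.hasDerivWithinAt)
    have hBd : ∀ x : ℝ, HasDerivAt (fun y => ψ r₂ - ε/2 * (y - r₂)) (-(ε/2)) x := by
      intro x
      have h1 : HasDerivAt (fun y : ℝ => ε/2 * (y - r₂)) (ε/2) x := by
        simpa using ((hasDerivAt_id x).sub_const r₂).const_mul (ε/2)
      simpa using h1.const_sub (ψ r₂)
    have hbound : ∀ x ∈ Ico r₂ b, ψ x = ψ r₂ - ε/2 * (x - r₂) → deriv ψ x < -(ε/2) := by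
      intro x hx hψx
      have hxr : R₀ ≤ x := le_trans hr₂ hx.1
      have hle : ψ x ≤ ψ r₂ := by
        have h1 : 0 ≤ ε/2 * (x - r₂) := mul_nonneg (by linarith) (by linarith [hx.1])
        rw [hψx]; linarith
      have hmon : (ψ x) ^ (p/(p-1)) ≤ (ψ r₂) ^ (p/(p-1)) :=
        Real.rpow_le_rpow (hψ_nonneg x hxr) hle (by positivity)
      have h2 := (hψD x hxr).2
      have h3 : (p - 1) * (ψ x) ^ (p/(p-1)) ≤ (p - 1) * (ψ r₂) ^ (p/(p-1)) :=
        mul_le_mul_of_nonneg_left hmon (by linarith)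
      have h4 : (p - 1) * (ψ r₂) ^ (p/(p-1)) - m/2 = -ε := by rw [hεdef]; ring
      linarith
    have key := image_le_of_deriv_right_lt_deriv_boundary hcont hder
      (by simp) hBd hbound (right_mem_Icc.mpr hr₂b)
    have hbge : 0 ≤ ψ b := hψ_nonneg b (le_trans hr₂ hr₂b)
    have hbv : ε/2 * (b - r₂) = (ψ r₂ + 1) + ε/2 := by
      rw [hbdef]; field_simp; ring
    rw [hbv] at key
    linarith
  -- step E : conclude u' ≤ -δ u and exponential decay
  have hud : ∀ r : ℝ, R₀ ≤ r → u' r ≤ -δ * u r := by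
    intro r hr
    have h := hψ_low r hr
    have hU := hu_pos r (hrpos r hr)
    have hnv : (0:ℝ) < -u' r := by linarith [hu'neg r hr]
    have hsp : δ ^ p ≤ (-u' r / u r) ^ p := by
      rw [← hspow r hr, hδp]
      rw [div_le_iff₀ (by linarith : (0:ℝ) < 2 * (p - 1))]
      nlinarith [h]
    have hδle : δ ≤ -u' r / u r := by
      by_contra hc
      push_neg at hc
      have := Real.rpow_lt_rpow (div_nonneg hnv.le hU.le) hc hp0
      linarith
    have h5 := (le_div_iff₀ hU).mp hδle
    linarith
  refine ⟨u R₀ * Real.exp (δ * R₀), mul_pos (hu_pos R₀ hR₀pos) (Real.exp_pos _), R₀, hR₀pos, ?_⟩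
  intro r hr
  have hderiv : ∀ x : ℝ, R₀ < x → HasDerivAt (fun s => u s * Real.exp (δ * s))
      (u' x * Real.exp (δ * x) + u x * (Real.exp (δ * x) * δ)) x := by
    intro x hx
    have hx0 : (0:ℝ) < x := lt_trans hR₀pos hx
    have hexp : HasDerivAt (fun s : ℝ => Real.exp (δ * s)) (Real.exp (δ * x) * δ) x := by
      simpa using ((hasDerivAt_id x).const_mul δ).exp
    exact (hu' x hx0).mul hexp
  have hanti : AntitoneOn (fun s => u s * Real.exp (δ * s)) (Ici R₀) := by
    apply antitoneOn_of_deriv_nonpos (convex_Ici _)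
    · intro x hx
      have hx0 := hrpos x hx
      have hexp : HasDerivAt (fun s : ℝ => Real.exp (δ * s)) (Real.exp (δ * x) * δ) x := by
        simpa using ((hasDerivAt_id x).const_mul δ).exp
      exact (((hu' x hx0).mul hexp).continuousAt).continuousWithinAt
    · intro x hx
      rw [interior_Ici] at hx
      exact (hderiv x hx).differentiableAt.differentiableWithinAt
    · intro x hx
      rw [interior_Ici] at hx
      rw [(hderiv x hx).deriv]
      have h6 := hud x hx.le
      have hepos := Real.exp_pos (δ * x)
      nlinarith [mul_le_mul_of_nonneg_right h6 hepos.le, hu_pos x (lt_trans hR₀pos hx)]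
  have hw := hanti (mem_Ici.mpr le_rfl) (mem_Ici.mpr hr) hr
  have hiv : Real.exp (-δ * r) = (Real.exp (δ * r))⁻¹ := by
    rw [← Real.exp_neg]; ring_nf
  calc u r = (u r * Real.exp (δ * r)) * Real.exp (-δ * r) := by
        rw [hiv]; field_simp
    _ ≤ (u R₀ * Real.exp (δ * R₀)) * Real.exp (-δ * r) :=
        mul_le_mul_of_nonneg_right hw (Real.exp_pos _).le
end
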